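/- Let p be a prime, F a field of characteristic 0 or > p containing a primitive p-th root of unity ρ, and A a cyclic division algebra of degree p over F with standard generators x, y satisfying x^p = α ∈ F^×, y^p = β ∈ F^×, y x y^{−1} = ρ x. Then for any c in the subfield F[x] and any 1 ≤ k ≤ p−1, one has (x + c·y^k)^p = x^p + N_{F[x]/F}(c)·y^{kp} ∈ F. Hence F·x + F[x]·y^k is a Kummer subspace: every nonzero element z of it satisfies z^p ∈ F^× and z^j ∉ F for 1 ≤ j < p. -/

import Mathlib

/-- `v` is a `p`-Kummer element: `v ^ p` is a nonzero scalar, while no smaller positive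
power of `v` is a scalar. -/
def IsKummerElem (F : Type*) {A : Type*} [Field F] [Ring A] [Algebra F A]
    (p : ℕ) (v : A) : Prop :=
  (∃ c : Fˣ, v ^ p = algebraMap F A c) ∧
    ∀ j : ℕ, 1 ≤ j → j < p → v ^ j ∉ Set.range (algebraMap F A)

/-- A Kummer subspace: every nonzero element is a Kummer element. -/
def IsKummerSpace (F : Type*) {A : Type*} [Field F] [Ring A] [Algebra F A]
    (p : ℕ) (V : Submodule F A) : Prop :=
  ∀ v ∈ V, v ≠ 0 → IsKummerElem F p v

open Finset

section qbinom

variable {F : Type*} [Field F]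

/-- q-binomial coefficients via the (right-multiplication) q-Pascal rule. -/
def qb (q : F) : ℕ → ℕ → F
  | _, 0 => 1
  | 0, _ + 1 => 0
  | n + 1, i + 1 => q ^ (n - i) * qb q n i + qb q n (i + 1)

lemma qb_zero (q : F) (n : ℕ) : qb q n 0 = 1 := by cases n <;> rfl

lemma qb_eq_zero (q : F) : ∀ {n i : ℕ}, n < i → qb q n i = 0
  | 0, _ + 1, _ => rfl
  | n + 1, i + 1, h => by
      show q ^ (n - i) * qb q n i + qb q n (i + 1) = 0
      rw [qb_eq_zero q (by omega), qb_eq_zero q (by omega), mul_zero, zero_add]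

lemma qb_diag (q : F) : ∀ n, qb q n n = 1
  | 0 => rfl
  | n + 1 => by
      show q ^ (n - n) * qb q n n + qb q n (n + 1) = 1
      rw [qb_diag q n, qb_eq_zero q (by omega), Nat.sub_self]; ring

lemma qb_succ_succ (q : F) (n i : ℕ) :
    qb q (n + 1) (i + 1) = q ^ (n - i) * qb q n i + qb q n (i + 1) := rfl

/-- The "q-factorial-like" product `∏ (q^(j+1) - 1)`. -/
def qf (q : F) (n : ℕ) : F := ∏ j ∈ Finset.range n, (q ^ (j + 1) - 1)

lemma qf_zero (q : F) : qf q 0 = 1 := by simp [qf]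

lemma qf_succ (q : F) (n : ℕ) : qf q (n + 1) = qf q n * (q ^ (n + 1) - 1) :=
  Finset.prod_range_succ _ _

lemma qb_mul_qf (q : F) : ∀ n i, i ≤ n → qb q n i * (qf q i * qf q (n - i)) = qf q n := by
  intro n
  induction n with
  | zero => intro i hi; interval_cases i; simp [qb_zero, qf_zero]
  | succ n ih =>
    intro i hi
    match i with
    | 0 => simp [qb_zero, qf_zero]
    | i + 1 =>
      rcases eq_or_lt_of_le hi with h | h
      · cases h
        rw [qb_diag, Nat.sub_self, qf_zero, one_mul, mul_one]
      · have hi' : i + 1 ≤ n := by omega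
        have h1 := ih i (by omega)
        have h2 := ih (i + 1) hi'
        have e1 : n - i = (n - (i + 1)) + 1 := by omega
        have e2 : n + 1 - (i + 1) = (n - (i + 1)) + 1 := by omega
        have hq : q ^ (n - i) * q ^ (i + 1) = q ^ (n + 1) := by
          rw [← pow_add]; congr 1; omega
        rw [e1, qf_succ] at h1
        rw [qf_succ] at h2
        rw [qb_succ_succ, e2, qf_succ q i, qf_succ q (n - (i+1)), qf_succ q n, ← hq, e1]
        linear_combination (q ^ (n - (i+1) + 1) * (q ^ (i + 1) - 1)) * h1 +
          (q ^ (n - (i+1) + 1) - 1) * h2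

lemma qf_ne_zero {q : F} {p : ℕ} (hqj : ∀ j : ℕ, 0 < j → j < p → q ^ j ≠ 1)
    {m : ℕ} (hm : m < p) : qf q m ≠ 0 := by
  rw [qf, Finset.prod_ne_zero_iff]
  intro j hj
  rw [Finset.mem_range] at hj
  exact sub_ne_zero.mpr (hqj (j + 1) (by omega) (by omega))

lemma qf_p_eq_zero {q : F} {p : ℕ} (hp : 0 < p) (hq1 : q ^ p = 1) : qf q p = 0 := by
  rw [qf]
  refine Finset.prod_eq_zero (Finset.mem_range.mpr (show p - 1 < p by omega)) ?_
  have : p - 1 + 1 = p := by omega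
  rw [this, hq1, sub_self]

lemma qb_prime_vanish {q : F} {p : ℕ} (hp : 0 < p) (hq1 : q ^ p = 1)
    (hqj : ∀ j : ℕ, 0 < j → j < p → q ^ j ≠ 1)
    {i : ℕ} (h0 : 0 < i) (hip : i < p) : qb q p i = 0 := by
  have key := qb_mul_qf q p i (le_of_lt hip)
  rw [qf_p_eq_zero hp hq1] at key
  have h1 : qf q i ≠ 0 := qf_ne_zero hqj hip
  have h2 : qf q (p - i) ≠ 0 := qf_ne_zero hqj (by omega)
  rcases mul_eq_zero.mp key with h | h
  · exact h
  · exact absurd h (mul_ne_zero h1 h2)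

section ring

variable {A : Type*} [Ring A] [Algebra F A]

lemma vpow_mul_qcomm {q : F} {u v : A} (h : v * u = q • (u * v)) :
    ∀ m : ℕ, v ^ m * u = q ^ m • (u * v ^ m)
  | 0 => by simp
  | m + 1 => by
    have ih := vpow_mul_qcomm h m
    calc v ^ (m + 1) * u = v ^ m * (v * u) := by rw [pow_succ, mul_assoc]
    _ = q • (v ^ m * (u * v)) := by rw [h, mul_smul_comm]
    _ = q • ((v ^ m * u) * v) := by rw [mul_assoc]
    _ = q • ((q ^ m • (u * v ^ m)) * v) := by rw [ih]
    _ = (q * q ^ m) • (u * v ^ m * v) := by rw [smul_mul_assoc, smul_smul]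
    _ = q ^ (m + 1) • (u * v ^ (m + 1)) := by rw [pow_succ', pow_succ, mul_assoc]

lemma add_pow_qcomm_expand {q : F} {u v : A} (h : v * u = q • (u * v)) (n : ℕ) :
    (u + v) ^ n = ∑ i ∈ range (n + 1), qb q n i • (u ^ i * v ^ (n - i)) := by
  induction n with
  | zero => simp [qb_zero]
  | succ n ih =>
    rw [pow_succ, ih, Finset.sum_mul]
    have hterm : ∀ i ∈ range (n + 1), (qb q n i • (u ^ i * v ^ (n - i))) * (u + v)
        = (q ^ (n - i) * qb q n i) • (u ^ (i + 1) * v ^ (n - i))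
          + qb q n i • (u ^ i * v ^ (n + 1 - i)) := by
      intro i hi
      have hin : i ≤ n := Nat.lt_succ_iff.mp (Finset.mem_range.mp hi)
      have e : n - i + 1 = n + 1 - i := by omega
      calc qb q n i • (u ^ i * v ^ (n - i)) * (u + v)
          = qb q n i • (u ^ i * (v ^ (n - i) * u)) + qb q n i • (u ^ i * (v ^ (n - i) * v)) := by
            rw [mul_add, smul_mul_assoc, smul_mul_assoc, mul_assoc, mul_assoc]
        _ = qb q n i • (q ^ (n - i) • (u ^ (i + 1) * v ^ (n - i)))
              + qb q n i • (u ^ i * v ^ (n + 1 - i)) := by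
            rw [vpow_mul_qcomm h, mul_smul_comm, ← mul_assoc, ← pow_succ, ← pow_succ, e]
        _ = (q ^ (n - i) * qb q n i) • (u ^ (i + 1) * v ^ (n - i))
              + qb q n i • (u ^ i * v ^ (n + 1 - i)) := by
            rw [smul_smul, mul_comm (qb q n i)]
    rw [Finset.sum_congr rfl hterm, Finset.sum_add_distrib]
    rw [Finset.sum_range_succ' (fun i => qb q (n + 1) i • (u ^ i * v ^ (n + 1 - i))) (n + 1)]
    have e0 : qb q (n + 1) 0 • (u ^ 0 * v ^ (n + 1 - 0)) = qb q n 0 • (u ^ 0 * v ^ (n + 1 - 0)) := by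
      rw [qb_zero, qb_zero]
    have hsplit : ∀ i ∈ range (n + 1),
        qb q (n + 1) (i + 1) • (u ^ (i + 1) * v ^ (n + 1 - (i + 1)))
          = (q ^ (n - i) * qb q n i) • (u ^ (i + 1) * v ^ (n - i))
            + qb q n (i + 1) • (u ^ (i + 1) * v ^ (n - i)) := by
      intro i hi
      rw [qb_succ_succ, add_smul, Nat.succ_sub_succ]
    rw [Finset.sum_congr rfl hsplit, Finset.sum_add_distrib, e0, add_assoc]
    congr 1
    -- remaining: ∑ qb n i • u^i v^(n+1-i) over range (n+1)
    --          = ∑_{i<n+1} qb n (i+1) • u^(i+1) v^(n-i) + qb n 0 • u^0 v^(n+1)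
    rw [Finset.sum_range_succ (fun i => qb q n (i + 1) • (u ^ (i + 1) * v ^ (n - i))) n]
    rw [qb_eq_zero q (by omega : n < n + 1), zero_smul, add_zero]
    rw [Finset.sum_range_succ' (fun i => qb q n i • (u ^ i * v ^ (n + 1 - i))) n]
    congr 1
    refine Finset.sum_congr rfl fun i hi => ?_
    rw [Nat.succ_sub_succ]

theorem add_pow_qcomm_prime {q : F} {u v : A} (h : v * u = q • (u * v)) {p : ℕ} (hp : 0 < p)
    (hq1 : q ^ p = 1) (hqj : ∀ j : ℕ, 0 < j → j < p → q ^ j ≠ 1) :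
    (u + v) ^ p = u ^ p + v ^ p := by
  rw [add_pow_qcomm_expand h p, Finset.sum_range_succ]
  rw [Finset.sum_eq_single 0]
  · rw [qb_zero, qb_diag, one_smul, one_smul, Nat.sub_zero, Nat.sub_self, pow_zero, pow_zero,
      one_mul, mul_one, add_comm]
  · intro i hi h0
    rw [qb_prime_vanish hp hq1 hqj (by omega) (Finset.mem_range.mp hi), zero_smul]
  · intro h0
    exact absurd (Finset.mem_range.mpr (by omega)) h0

end ring
end qbinom


section conj

/-- Conjugation by a nonzero element, as an algebra automorphism of a division algebra. -/
noncomputable def conjAE {F A : Type*} [CommSemiring F] [DivisionRing A] [Algebra F A]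
    (w : A) (hw : w ≠ 0) : A ≃ₐ[F] A where
  toFun a := w * a * w⁻¹
  invFun a := w⁻¹ * a * w
  left_inv a := by
    simp only [mul_assoc, inv_mul_cancel₀ hw, mul_one]
    rw [inv_mul_cancel_left₀ hw]
  right_inv a := by
    simp only [mul_assoc, mul_inv_cancel₀ hw, mul_one]
    rw [mul_inv_cancel_left₀ hw]
  map_mul' a b := by
    simp only [mul_assoc, inv_mul_cancel_left₀ hw]
  map_add' a b := by
    simp only [mul_add, add_mul]
  commutes' r := by
    show w * algebraMap F A r * w⁻¹ = algebraMap F A r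
    rw [← Algebra.commutes r w, mul_inv_cancel_right₀ hw]

lemma conjAE_apply {F A : Type*} [CommSemiring F] [DivisionRing A] [Algebra F A]
    (w : A) (hw : w ≠ 0) (a : A) : conjAE (F := F) w hw a = w * a * w⁻¹ := rfl

end conj

open Polynomial


set_option maxHeartbeats 2000000

/-- In a cyclic division algebra
`A = F[x, y : xᵖ = α, yᵖ = β, yxy⁻¹ = ρx]` of degree `p` (with `ρ ∈ F` a primitive
`p`-th root of unity and `char F = 0` or `> p`), for every `c ∈ F[x]` and `1 ≤ k ≤ p-1`
one has `(x + c·yᵏ)ᵖ = xᵖ + N_{F[x]/F}(c)·yᵏᵖ ∈ F`, and `F·x + F[x]·yᵏ` is a Kummer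
subspace. -/
theorem cyclic_algebra_standard_space_isKummer
    (p : ℕ) (hp : p.Prime)
    (F : Type*) [Field F] (A : Type*) [DivisionRing A] [Algebra F A]
    (hchar : ∀ n : ℕ, n ≠ 0 → n ≤ p → (n : F) ≠ 0)
    (ρ : F) (hρ : IsPrimitiveRoot ρ p)
    (hdeg : Module.finrank F A = p ^ 2) (hcen : Subalgebra.center F A = ⊥)
    (x y : A) (α β : Fˣ)
    (hx : x ^ p = algebraMap F A α) (hy : y ^ p = algebraMap F A β)
    (hyx : y * x = algebraMap F A ρ * (x * y))
    (k : ℕ) (hk1 : 1 ≤ k) (hkp : k ≤ p - 1) :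
    (∀ c : Algebra.adjoin F ({x} : Set A),
        (x + (c : A) * y ^ k) ^ p =
          x ^ p + algebraMap F A (Algebra.norm F c) * y ^ (k * p)) ∧
    IsKummerSpace F p (Submodule.span F
      ({x} ∪ {z : A | ∃ c ∈ Algebra.adjoin F ({x} : Set A), z = c * y ^ k})) := by
  classical
  have hp0 : 0 < p := hp.pos
  have hp1 : 1 < p := hp.one_lt
  have hkp' : k < p := by omega
  have injFA : Function.Injective (algebraMap F A) := (algebraMap F A).injective
  haveI : FiniteDimensional F A := FiniteDimensional.of_finrank_pos (by rw [hdeg]; positivity)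
  haveI : NoZeroSMulDivisors F A := inferInstance
  have hx0 : x ≠ 0 := by
    intro h
    have h2 : algebraMap F A (α : F) = 0 := by rw [← hx, h, zero_pow hp0.ne']
    exact α.ne_zero ((map_eq_zero_iff _ injFA).mp h2)
  have hy0 : y ≠ 0 := by
    intro h
    have h2 : algebraMap F A (β : F) = 0 := by rw [← hy, h, zero_pow hp0.ne']
    exact β.ne_zero ((map_eq_zero_iff _ injFA).mp h2)
  have hyx' : y * x = ρ • (x * y) := by rw [hyx, Algebra.smul_def]
  have hyxn : ∀ m : ℕ, y ^ m * x = (ρ ^ m) • (x * y ^ m) := by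
    intro m
    induction m with
    | zero => simp
    | succ m ih =>
      calc y ^ (m + 1) * x = y * (y ^ m * x) := by rw [pow_succ', mul_assoc]
      _ = ρ ^ m • (y * x * y ^ m) := by rw [ih, mul_smul_comm, mul_assoc]
      _ = ρ ^ m • (ρ • (x * y * y ^ m)) := by rw [hyx', smul_mul_assoc]
      _ = ρ ^ (m + 1) • (x * y ^ (m + 1)) := by
          rw [smul_smul, mul_comm (ρ ^ m) ρ, ← pow_succ', mul_assoc, ← pow_succ']
  -- the commutative subalgebra K = F[x]
  set K := Algebra.adjoin F ({x} : Set A) with hKdef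
  letI : CommRing K := Algebra.adjoinCommRingOfComm F
    (fun a ha b hb => by rw [Set.mem_singleton_iff] at ha hb; rw [ha, hb])
  letI : IsDomain K := Function.Injective.isDomain K.val.toRingHom Subtype.val_injective
  haveI : FiniteDimensional F K :=
    FiniteDimensional.of_injective K.val.toLinearMap Subtype.val_injective
  haveI : Algebra.IsIntegral F K := Algebra.IsIntegral.of_finite F K
  have hKf : IsField K := isField_of_isIntegral_of_isField' (Field.toIsField F)
  letI : Field K := hKf.toField
  have hxK : x ∈ K := Algebra.self_mem_adjoin_singleton F x
  set θ : K := ⟨x, hxK⟩ with hθdef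
  have hcoeA : ∀ r : F, ((algebraMap F K r : K) : A) = algebraMap F A r := fun r => rfl
  have hθp : θ ^ p = algebraMap F K (α : F) := by
    apply Subtype.ext
    rw [SubmonoidClass.coe_pow]
    exact hx
  have hθ0 : θ ≠ 0 := fun h => hx0 (congrArg Subtype.val h)
  have hadjθ : Algebra.adjoin F ({θ} : Set K) = ⊤ := by
    apply Subalgebra.map_injective (f := K.val) Subtype.val_injective
    rw [AlgHom.map_adjoin, Set.image_singleton, Algebra.map_top, Subalgebra.range_val]
    rfl
  have hρK : IsPrimitiveRoot (algebraMap F K ρ) p :=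
    hρ.map_of_injective (algebraMap F K).injective
  have hxy0 : x * y ≠ 0 := mul_ne_zero hx0 hy0
  have hρ1 : ρ ≠ 1 := hρ.ne_one hp1
  -- x cannot be a scalar
  have hx_not_scalar : ∀ s : F, x ≠ algebraMap F A s := by
    intro s hxs
    have hc : y * x = x * y := by rw [hxs, ← Algebra.commutes]
    have h2 : algebraMap F A ρ * (x * y) = 1 * (x * y) := by
      rw [one_mul, ← hyx, hc]
    have h3 : algebraMap F A ρ = 1 := mul_right_cancel₀ hxy0 h2
    exact hρ1 (injFA (by rw [h3, map_one]))
  -- α is not a p-th power in F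
  have h_nopow : ∀ b : F, b ^ p ≠ (α : F) := by
    intro b hb
    have hfact : (X ^ p - C (algebraMap F K (α : F))) = ∏ i ∈ Finset.range p,
        (X - C ((algebraMap F K ρ) ^ i * algebraMap F K b)) :=
      X_pow_sub_C_eq_prod hρK hp0 (by rw [← map_pow, hb])
    have hev : ∏ i ∈ Finset.range p,
        (θ - (algebraMap F K ρ) ^ i * algebraMap F K b) = 0 := by
      have h1 := congrArg (Polynomial.eval θ) hfact
      simp only [Polynomial.eval_sub, Polynomial.eval_pow, Polynomial.eval_X,
        Polynomial.eval_C, Polynomial.eval_prod, Polynomial.eval_mul] at h1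
      rw [hθp, sub_self] at h1
      exact h1.symm
    obtain ⟨i, -, hzero⟩ := Finset.prod_eq_zero_iff.mp hev
    have hθs : θ = algebraMap F K (ρ ^ i * b) := by
      rw [map_mul, map_pow]
      exact sub_eq_zero.mp hzero
    exact hx_not_scalar (ρ ^ i * b) (by
      have := congrArg Subtype.val hθs
      rwa [hcoeA] at this)
  have hirr : Irreducible (X ^ p - C (α : F)) := X_pow_sub_C_irreducible_of_prime hp h_nopow
  have hmap : (X ^ p - C (α : F)).map (algebraMap F K)
      = X ^ p - C (algebraMap F K (α : F)) := by
    rw [Polynomial.map_sub, Polynomial.map_pow, Polynomial.map_X, Polynomial.map_C]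
  have hfactθ : (X ^ p - C (algebraMap F K (α : F))) = ∏ i ∈ Finset.range p,
      (X - C ((algebraMap F K ρ) ^ i * θ)) := X_pow_sub_C_eq_prod hρK hp0 hθp
  have hsplits : Polynomial.Splits ((X ^ p - C (α : F)).map (algebraMap F K)) := by
    rw [hmap, hfactθ]
    exact Polynomial.Splits.prod (fun i _ => Polynomial.Splits.X_sub_C _)
  have hne0 : (X ^ p - C (α : F)) ≠ 0 := hirr.ne_zero
  haveI hsf : Polynomial.IsSplittingField F K (X ^ p - C (α : F)) := by
    constructor
    · exact hsplits
    · rw [eq_top_iff, ← hadjθ]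
      apply Algebra.adjoin_mono
      rw [Set.singleton_subset_iff, Polynomial.mem_rootSet]
      refine ⟨hne0, ?_⟩
      rw [map_sub, map_pow, Polynomial.aeval_X, Polynomial.aeval_C, hθp, sub_self]
  have hprimF : (primitiveRoots p F).Nonempty := ⟨ρ, (mem_primitiveRoots hp0).mpr hρ⟩
  haveI : IsGalois F K := isGalois_of_isSplittingField_X_pow_sub_C hprimF hirr K
  have hfinK : Module.finrank F K = p := finrank_of_isSplittingField_X_pow_sub_C hprimF hirr K
  -- the automorphism of K given by conjugation with w := y^k
  set w : A := y ^ k with hwdef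
  have hw0 : w ≠ 0 := pow_ne_zero _ hy0
  have hwx : w * x = (ρ ^ k) • (x * w) := hyxn k
  set e : A ≃ₐ[F] A := conjAE (F := F) w hw0 with hedef
  have hex : e x = (ρ ^ k) • x := by
    rw [conjAE_apply, hwx, smul_mul_assoc, mul_inv_cancel_right₀ hw0]
  have hmapsK : ∀ a ∈ K, e a ∈ K := by
    intro a ha
    have hle : K.map e.toAlgHom ≤ K := by
      rw [hKdef, AlgHom.map_adjoin, Set.image_singleton]
      apply Algebra.adjoin_le
      rw [Set.singleton_subset_iff]
      show e x ∈ K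
      rw [hex]
      exact Subalgebra.smul_mem _ hxK _
    exact hle ⟨a, ha, rfl⟩
  set g0 : K →ₐ[F] K := (e.toAlgHom.comp K.val).codRestrict K
    (fun a => hmapsK _ a.2) with hg0def
  have hg0inj : Function.Injective g0 :=
    fun a b hab => Subtype.ext (e.injective (congrArg Subtype.val hab))
  have hg0surj : Function.Surjective g0 :=
    LinearMap.surjective_of_injective (f := g0.toLinearMap) hg0inj
  set g : K ≃ₐ[F] K := AlgEquiv.ofBijective g0 ⟨hg0inj, hg0surj⟩ with hgdef
  have hg : ∀ a : K, ((g a : K) : A) = w * (a : A) * w⁻¹ := fun a => rfl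
  have hgc : ∀ a : K, w * (a : A) = ((g a : K) : A) * w := by
    intro a
    rw [hg, inv_mul_cancel_right₀ hw0]
  have hgθ : g θ = algebraMap F K (ρ ^ k) * θ := by
    apply Subtype.ext
    rw [hg]
    push_cast [hcoeA]
    rw [hwx, smul_mul_assoc, mul_inv_cancel_right₀ hw0, Algebra.smul_def, map_pow]
  have hgcm : ∀ (m : ℕ) (a : K), w ^ m * (a : A) = (((g ^ m) a : K) : A) * w ^ m := by
    intro m
    induction m with
    | zero => intro a; simp
    | succ m ih =>
      intro a
      calc w ^ (m + 1) * (a : A) = w * (w ^ m * (a : A)) := by rw [pow_succ', mul_assoc]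
      _ = w * ((((g ^ m) a : K) : A) * w ^ m) := by rw [ih]
      _ = (w * (((g ^ m) a : K) : A)) * w ^ m := by rw [mul_assoc]
      _ = ((g ((g ^ m) a) : K) : A) * w * w ^ m := by rw [hgc]
      _ = (((g ^ (m + 1)) a : K) : A) * w ^ (m + 1) := by
          rw [pow_succ' g, AlgEquiv.mul_apply, mul_assoc, ← pow_succ']
  have hpowm : ∀ (c : K) (m : ℕ),
      ((c : A) * w) ^ m = ((∏ i ∈ Finset.range m, (g ^ i) c : K) : A) * w ^ m := by
    intro c m
    induction m with
    | zero => simp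
    | succ m ih =>
      calc ((c : A) * w) ^ (m + 1) = ((c : A) * w) ^ m * ((c : A) * w) := pow_succ _ _
      _ = ((∏ i ∈ Finset.range m, (g ^ i) c : K) : A) * (w ^ m * (c : A)) * w := by
          rw [ih]; rw [mul_assoc, mul_assoc, mul_assoc]
      _ = ((∏ i ∈ Finset.range m, (g ^ i) c : K) : A)
            * ((((g ^ m) c : K) : A) * w ^ m) * w := by rw [hgcm]
      _ = (((∏ i ∈ Finset.range m, (g ^ i) c) * ((g ^ m) c) : K) : A) * (w ^ m * w) := by
          push_cast; rw [mul_assoc, mul_assoc, mul_assoc]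
      _ = ((∏ i ∈ Finset.range (m + 1), (g ^ i) c : K) : A) * w ^ (m + 1) := by
          rw [Finset.prod_range_succ, pow_succ]
  have hcard : Fintype.card (K ≃ₐ[F] K) = p := by
    rw [← Nat.card_eq_fintype_card, IsGalois.card_aut_eq_finrank, hfinK]
  have hρk1 : ρ ^ k ≠ 1 := hρ.pow_ne_one_of_pos_of_lt (by omega) hkp'
  have hgne : g ≠ 1 := by
    intro h
    have h1 : g θ = θ := by rw [h]; rfl
    rw [hgθ] at h1
    have h2 : (algebraMap F K (ρ ^ k) - 1) * θ = 0 := by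
      rw [sub_mul, one_mul, h1, sub_self]
    rcases mul_eq_zero.mp h2 with h3 | h3
    · exact hρk1 ((algebraMap F K).injective (by rw [map_one]; exact sub_eq_zero.mp h3))
    · exact hθ0 h3
  have horder : orderOf g = p := by
    have hdvd : orderOf g ∣ p := hcard ▸ orderOf_dvd_card
    rcases (Nat.Prime.eq_one_or_self_of_dvd hp _ hdvd) with h | h
    · exact absurd (orderOf_eq_one_iff.mp h) hgne
    · exact h
  have hbij : Function.Bijective (fun i : Fin p => g ^ (i : ℕ)) := by
    rw [Fintype.bijective_iff_injective_and_card]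
    constructor
    · intro i j hij
      exact Fin.ext (pow_injOn_Iio_orderOf (by rw [horder]; exact i.2)
        (by rw [horder]; exact j.2) hij)
    · rw [Fintype.card_fin, hcard]
  have hnorm : ∀ c : K, algebraMap F K (Algebra.norm F c) = ∏ i ∈ Finset.range p, (g ^ i) c := by
    intro c
    rw [Algebra.norm_eq_prod_automorphisms]
    exact (Fintype.prod_bijective (fun i : Fin p => g ^ (i : ℕ)) hbij
      (fun i : Fin p => (g ^ (i : ℕ)) c) (fun σ => σ c) (fun i => rfl)).symm.trans
      (Fin.prod_univ_eq_prod_range (fun i => (g ^ i) c) p)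
  -- coprimality and the primitive root q = ρ^k
  have hcop : Nat.Coprime k p :=
    Nat.Coprime.symm (hp.coprime_iff_not_dvd.mpr (Nat.not_dvd_of_pos_of_lt (by omega) hkp'))
  have hqprim : IsPrimitiveRoot (ρ ^ k) p := hρ.pow_of_coprime k hcop
  have hq1 : (ρ ^ k) ^ p = 1 := by
    rw [← pow_mul, mul_comm k p, pow_mul, hρ.pow_eq_one, one_pow]
  have hqj : ∀ j : ℕ, 0 < j → j < p → (ρ ^ k) ^ j ≠ 1 :=
    fun j h1 h2 => hqprim.pow_ne_one_of_pos_of_lt h1.ne' h2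
  -- the key p-th power formula for c * y^k
  have hvp : ∀ c : K, ((c : A) * w) ^ p = algebraMap F A (Algebra.norm F c) * w ^ p := by
    intro c
    rw [hpowm c p, ← hnorm c, hcoeA]
  -- Part 1
  have part1 : ∀ c : K,
      (x + (c : A) * y ^ k) ^ p = x ^ p + algebraMap F A (Algebra.norm F c) * y ^ (k * p) := by
    intro c
    have hxc : x * (c : A) = (c : A) * x := congrArg Subtype.val (mul_comm θ c)
    have hqv : ((c : A) * w) * x = (ρ ^ k) • (x * ((c : A) * w)) := by
      calc (c : A) * w * x = (c : A) * (w * x) := by rw [mul_assoc]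
      _ = (c : A) * ((ρ ^ k) • (x * w)) := by rw [hwx]
      _ = (ρ ^ k) • ((c : A) * (x * w)) := by rw [mul_smul_comm]
      _ = (ρ ^ k) • (((c : A) * x) * w) := by rw [mul_assoc]
      _ = (ρ ^ k) • ((x * (c : A)) * w) := by rw [hxc]
      _ = (ρ ^ k) • (x * ((c : A) * w)) := by rw [mul_assoc]
    have hbinom := add_pow_qcomm_prime hqv hp0 hq1 hqj
    rw [hbinom, hvp c, hwdef, ← pow_mul]
  -- Part 2 preliminaries
  have hwp : w ^ p = algebraMap F A ((β : F) ^ k) := by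
    rw [hwdef, ← pow_mul, mul_comm k p, pow_mul, hy, ← map_pow]
  have hzp_formula : ∀ (a : F) (c : K),
      (a • x + (c : A) * y ^ k) ^ p
        = algebraMap F A (a ^ p * (α : F) + Algebra.norm F c * (β : F) ^ k) := by
    intro a c
    by_cases ha : a = 0
    · subst ha
      rw [zero_smul, zero_add, zero_pow hp0.ne', zero_mul, zero_add]
      rw [show ((c : A) * y ^ k) = (c : A) * w from rfl, hvp c, hwp, ← map_mul]
    · set c' : K := a⁻¹ • c with hc'def
      have hz' : a • x + (c : A) * y ^ k = a • (x + (c' : A) * y ^ k) := by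
        rw [smul_add, hc'def]
        congr 1
        rw [SetLike.val_smul, smul_mul_assoc, smul_smul, mul_inv_cancel₀ ha, one_smul]
      rw [hz', _root_.smul_pow, part1 c']
      have hnc' : Algebra.norm F c' = a⁻¹ ^ p * Algebra.norm F c := by
        rw [hc'def, Algebra.smul_def, map_mul, Algebra.norm_algebraMap, hfinK]
      rw [hnc', hx, mul_comm k p, pow_mul, hy, ← map_pow, ← map_mul, ← map_add,
        Algebra.smul_def, ← map_mul]
      congr 1
      have hap : a ^ p * a⁻¹ ^ p = 1 := by rw [← mul_pow, mul_inv_cancel₀ ha, one_pow]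
      linear_combination (Algebra.norm F c * (β : F) ^ k) * hap
  -- the span is F•x + K•y^k
  have hdecomp : ∀ z ∈ Submodule.span F
      ({x} ∪ {z : A | ∃ c ∈ K, z = c * y ^ k}), ∃ (a : F) (c : K), z = a • x + (c : A) * y ^ k := by
    intro z hz
    rw [Submodule.span_union] at hz
    obtain ⟨z1, hz1, z2, hz2, rfl⟩ := Submodule.mem_sup.mp hz
    obtain ⟨a, ha⟩ := Submodule.mem_span_singleton.mp hz1
    have hSeq : {z : A | ∃ c ∈ K, z = c * y ^ k}
        = ((Subalgebra.toSubmodule K).map (LinearMap.mulRight F (y ^ k)) : Submodule F A) := by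
      ext t
      simp only [Set.mem_setOf_eq, SetLike.mem_coe, Submodule.mem_map,
        Subalgebra.mem_toSubmodule, LinearMap.mulRight_apply]
      constructor
      · rintro ⟨c, hc, rfl⟩; exact ⟨c, hc, rfl⟩
      · rintro ⟨c, hc, rfl⟩; exact ⟨c, hc, rfl⟩
    rw [hSeq, Submodule.span_eq] at hz2
    obtain ⟨c, hc, rfl⟩ := Submodule.mem_map.mp hz2
    exact ⟨a, ⟨c, hc⟩, by rw [← ha]; rfl⟩
  -- scalars in the space are zero
  have hscalar : ∀ (a : F) (c : K),
      a • x + (c : A) * y ^ k ∈ Set.range (algebraMap F A) → a • x + (c : A) * y ^ k = 0 := by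
    rintro a c ⟨s, hs⟩
    by_cases hc : c = 0
    · subst hc
      rw [ZeroMemClass.coe_zero, zero_mul, add_zero] at hs ⊢
      by_cases ha : a = 0
      · rw [ha, zero_smul]
      · exfalso
        apply hx_not_scalar (a⁻¹ * s)
        rw [map_mul, hs, Algebra.smul_def, ← mul_assoc, ← map_mul,
          inv_mul_cancel₀ ha, map_one, one_mul]
    · exfalso
      have hcA : (c : A) ≠ 0 := fun h => hc (Subtype.ext h)
      have h1 : (c : A) * y ^ k = algebraMap F A s - a • x := eq_sub_of_add_eq' hs.symm
      have hykK : y ^ k ∈ K := by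
        have h2 : y ^ k = (c : A)⁻¹ * (algebraMap F A s - a • x) := by
          rw [← h1, inv_mul_cancel_left₀ hcA]
        rw [h2]
        have hcinv : (c : A)⁻¹ ∈ K := by
          have : ((c⁻¹ : K) : A) * (c : A) = 1 := by
            rw [← MulMemClass.coe_mul, inv_mul_cancel₀ hc, OneMemClass.coe_one]
          rw [inv_eq_of_mul_eq_one_left this]
          exact (c⁻¹ : K).2
        exact K.mul_mem hcinv (K.sub_mem (K.algebraMap_mem s) (K.smul_mem hxK a))
      have hcomm : y ^ k * x = x * y ^ k :=
        congrArg Subtype.val (mul_comm (⟨y ^ k, hykK⟩ : K) θ)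
      rw [hyxn k] at hcomm
      have h3 : (ρ ^ k - 1) • (x * y ^ k) = 0 := by
        rw [sub_smul, one_smul, hcomm, sub_self]
      rcases smul_eq_zero.mp h3 with h4 | h4
      · exact (hρk1 (sub_eq_zero.mp h4)).elim
      · exact (mul_ne_zero hx0 (pow_ne_zero k hy0)) h4
  refine ⟨part1, ?_⟩
  intro z hz hz0
  obtain ⟨a, c, rfl⟩ := hdecomp z hz
  have hT : a ^ p * (α : F) + Algebra.norm F c * (β : F) ^ k ≠ 0 := by
    intro h
    apply hz0
    have h1 := hzp_formula a c
    rw [h, map_zero] at h1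
    exact pow_eq_zero_iff hp0.ne' |>.mp h1
  constructor
  · exact ⟨Units.mk0 _ hT, hzp_formula a c⟩
  · intro j hj1 hjp hmem
    obtain ⟨s, hs⟩ := hmem
    set z := a • x + (c : A) * y ^ k with hzdef
    have hs0 : s ≠ 0 := by
      intro h
      apply hz0
      rw [h, map_zero] at hs
      exact pow_eq_zero_iff (by omega : j ≠ 0) |>.mp hs.symm
    have hjcop : Nat.Coprime j p :=
      Nat.Coprime.symm (hp.coprime_iff_not_dvd.mpr (Nat.not_dvd_of_pos_of_lt (by omega) hjp))
    obtain ⟨m, -, hm⟩ := Nat.exists_mul_mod_eq_one_of_coprime hjcop hp1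
    have hdm : j * m = p * (j * m / p) + 1 := by
      conv_lhs => rw [← Nat.div_add_mod (j * m) p]
      rw [hm]
    set d := j * m / p with hddef
    have hpowz : z ^ (j * m) = algebraMap F A ((a ^ p * (α : F)
        + Algebra.norm F c * (β : F) ^ k) ^ d) * z := by
      rw [hdm, pow_add, pow_one, pow_mul, hzp_formula a c, ← map_pow]
    have hpowz' : z ^ (j * m) = algebraMap F A (s ^ m) := by
      rw [pow_mul, ← hs, ← map_pow]
    have hz_scalar : z ∈ Set.range (algebraMap F A) := by
      have hTd : ((a ^ p * (α : F) + Algebra.norm F c * (β : F) ^ k) ^ d) ≠ 0 := pow_ne_zero _ hT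
      refine ⟨((a ^ p * (α : F) + Algebra.norm F c * (β : F) ^ k) ^ d)⁻¹ * s ^ m, ?_⟩
      rw [map_mul]
      rw [hpowz] at hpowz'
      rw [← hpowz']
      rw [← mul_assoc, ← map_mul, inv_mul_cancel₀ hTd, map_one, one_mul]
    exact hz0 (hscalar a c hz_scalar)
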